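/- Let (C, R, 𝓡) be a big-step semantics, 𝓡^? its partial-evaluation semantics, ⇝ the one-step reduction relation on finite proof trees in 𝓡^?, and ⊑ the order on such trees (with strict version ⊏). Then for all finite proof trees τ, τ' in 𝓡^?: (1) if τ ⇝ τ' then τ ⊏ τ'; (2) if τ ⊑ τ' then τ ⇝* τ' (reflexive-transitive closure). -/

import Mathlib

namespace BigStepMeta

universe u

/-- A judgment `c ⇒ r`: a configuration together with a result. -/
structure Judg (C : Type u) where
  conf : C
  res  : C

/-- A big-step rule: a conclusion configuration plus a nonempty finite list of premises.
The last premise is the continuation; the conclusion judgment is `concl ⇒ (last premise).res`. -/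
structure Rule (C : Type u) where
  concl : C
  premises : List (Judg C)
  ne : premises ≠ []

/-- The last premise (continuation) of a rule. -/
def Rule.lastJ {C : Type u} (ρ : Rule C) : Judg C := ρ.premises.getLast ρ.ne

/-- A big-step semantics `(C, R, 𝓡)`: configurations `C`, results `R ⊆ C`, rules `𝓡`. -/
structure BigStep (C : Type u) where
  R : Set C
  Rules : Set (Rule C)
  concl_not_res : ∀ ρ ∈ Rules, ρ.concl ∉ R
  prem_res : ∀ ρ ∈ Rules, ∀ j ∈ ρ.premises, j.res ∈ R

variable {C : Type u}

/-- Condition BP: the number of premises of rules is bounded. -/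
def BigStep.BP (S : BigStep C) : Prop :=
  ∃ b : ℕ, ∀ ρ ∈ S.Rules, ρ.premises.length ≤ b

/-- Inductive derivability `⊢_𝓡 c ⇒ r`: there is a finite proof tree.
For each result `r ∈ R` there is an implicit axiom `r ⇒ r`. -/
inductive Derives (S : BigStep C) : C → C → Prop
  | ax {r : C} : r ∈ S.R → Derives S r r
  | rule {ρ : Rule C} : ρ ∈ S.Rules →
      (∀ j ∈ ρ.premises, Derives S j.conf j.res) →
      Derives S ρ.concl ρ.lastJ.res

/-! ## Traces -/

/-- A finite or infinite trace of configurations. -/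
inductive Trace (C : Type u) where
  | fin : List C → Trace C
  | inf : (ℕ → C) → Trace C

/-- Concatenation of a finite list with an infinite sequence. -/
def appendInf (l : List C) (f : ℕ → C) : ℕ → C :=
  fun n => if h : n < l.length then l.get ⟨n, h⟩ else f (n - l.length)

/-- The finite trace `t_k · R(j_k)` associated to a premise and a chosen finite trace. -/
def finPart (p : Judg C × List C) : List C := p.2 ++ [p.1.res]

/-- The rule instances of the trace semantics `𝓡^tr`: a conclusion `c ⇒ t`
together with its list of premises. -/
inductive TrRule (S : BigStep C) : C → Trace C → List (C × Trace C) → Prop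
  | ax {r : C} : r ∈ S.R → TrRule S r (.fin [r]) []
  | intro {ρ : Rule C} {ts : List (List C)} :
      ρ ∈ S.Rules → ts.length = ρ.premises.length →
      TrRule S ρ.concl
        (.fin (ρ.concl :: ((ρ.premises.zip ts).map finPart).flatten))
        ((ρ.premises.zip ts).map (fun p => (p.1.conf, Trace.fin (finPart p))))
  | div {ρ : Rule C} {pre rest : List (Judg C)} {j : Judg C} {ts : List (List C)} {f : ℕ → C} :
      ρ ∈ S.Rules → ρ.premises = pre ++ j :: rest →
      ts.length = pre.length →
      TrRule S ρ.concl
        (.inf (appendInf (ρ.concl :: ((pre.zip ts).map finPart).flatten) f))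
        (((pre.zip ts).map (fun p => (p.1.conf, Trace.fin (finPart p)))) ++
          [(j.conf, Trace.inf f)])

/-- `⊢_{𝓡^tr} c ⇒ t` by a finite derivation (inductive interpretation of `𝓡^tr`). -/
inductive TrDerivesFin (S : BigStep C) : C → Trace C → Prop
  | step {c : C} {t : Trace C} {prems : List (C × Trace C)} :
      TrRule S c t prems →
      (∀ p ∈ prems, TrDerivesFin S p.1 p.2) →
      TrDerivesFin S c t

/-- `⊢_{𝓡^tr} c ⇒ t`: coinductive interpretation of `𝓡^tr`, i.e. existence of a possibly
infinite proof tree, expressed as membership in some backward-closed (consistent) relation. -/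
def TrDerives (S : BigStep C) (c : C) (t : Trace C) : Prop :=
  ∃ X : C → Trace C → Prop,
    (∀ c' t', X c' t' → ∃ prems, TrRule S c' t' prems ∧ ∀ p ∈ prems, X p.1 p.2) ∧
    X c t

/-! ## Wrong -/

/-- There is a rule with conclusion configuration `c`, first premises `pre`, whose next
premise has configuration `c'` and result `r` (i.e. a rule `ρ' ∼ᵢ ρ` with `R(ρ', i) = r`). -/
def HasContinuation (S : BigStep C) (c : C) (pre : List (Judg C)) (c' r : C) : Prop :=
  ∃ ρ' ∈ S.Rules, ∃ j' : Judg C, ∃ rest' : List (Judg C),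
    ρ'.premises = pre ++ j' :: rest' ∧ ρ'.concl = c ∧ j'.conf = c' ∧ j'.res = r

/-- Derivability in the wrong semantics `𝓡^wr`; `none` plays the role of `wrong`. -/
inductive DerivesW (S : BigStep C) : C → Option C → Prop
  | ax {r : C} : r ∈ S.R → DerivesW S r (some r)
  | rule {ρ : Rule C} : ρ ∈ S.Rules →
      (∀ j ∈ ρ.premises, DerivesW S j.conf (some j.res)) →
      DerivesW S ρ.concl (some ρ.lastJ.res)
  | wrong_intro {ρ : Rule C} {pre rest : List (Judg C)} {j : Judg C} {r : C} :
      ρ ∈ S.Rules → ρ.premises = pre ++ j :: rest → r ∈ S.R →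
      ¬ HasContinuation S ρ.concl pre j.conf r →
      (∀ j' ∈ pre, DerivesW S j'.conf (some j'.res)) →
      DerivesW S j.conf (some r) →
      DerivesW S ρ.concl none
  | wrong_ax {c : C} : c ∉ S.R → (¬ ∃ ρ ∈ S.Rules, ρ.concl = c) →
      DerivesW S c none
  | wrong_prop {ρ : Rule C} {pre rest : List (Judg C)} {j : Judg C} :
      ρ ∈ S.Rules → ρ.premises = pre ++ j :: rest →
      (∀ j' ∈ pre, DerivesW S j'.conf (some j'.res)) →
      DerivesW S j.conf none →
      DerivesW S ρ.concl none

/-! ## Indexed predicates and soundness conditions -/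

variable {I : Type u}

/-- `c ∈ Π`, i.e. `c ∈ Π_ι` for some index `ι`. -/
def InPred (P : I → Set C) (c : C) : Prop := ∃ i : I, c ∈ P i

/-- Condition S1 (local preservation). -/
def LocalPres (S : BigStep C) (P : I → Set C) : Prop :=
  ∀ ρ ∈ S.Rules, ∀ i : I, ρ.concl ∈ P i →
    ∃ f : ℕ → I, f (ρ.premises.length - 1) = i ∧
      ∀ (k : ℕ) (hk : k < ρ.premises.length),
        (∀ (h : ℕ) (hh : h < k), (ρ.premises.get ⟨h, hh.trans hk⟩).res ∈ P (f h)) →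
        (ρ.premises.get ⟨k, hk⟩).conf ∈ P (f k)

/-- Condition S2 (∃-progress). -/
def ExProgress (S : BigStep C) (P : I → Set C) : Prop :=
  ∀ c : C, InPred P c → c ∉ S.R → ∃ ρ ∈ S.Rules, ρ.concl = c

/-- Condition S3 (∀-progress). -/
def AllProgress (S : BigStep C) (P : I → Set C) : Prop :=
  ∀ ρ ∈ S.Rules, InPred P ρ.concl →
    ∀ (pre : List (Judg C)) (j : Judg C) (rest : List (Judg C)),
      ρ.premises = pre ++ j :: rest →
      (∀ j' ∈ pre, Derives S j'.conf j'.res) →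
      ∀ r ∈ S.R, Derives S j.conf r →
      HasContinuation S ρ.concl pre j.conf r

/-- Condition S4 (progress-may). -/
def ProgressMay (S : BigStep C) (P : I → Set C) : Prop :=
  ∀ c : C, InPred P c → c ∉ S.R →
    ∃ ρ ∈ S.Rules, ρ.concl = c ∧
      ∀ (pre : List (Judg C)) (j : Judg C) (rest : List (Judg C)),
        ρ.premises = pre ++ j :: rest →
        (∀ j' ∈ pre, Derives S j'.conf j'.res) →
        ¬ Derives S j.conf j.res →
        ¬ ∃ r : C, Derives S j.conf r

/-! ## Partial evaluation: the inference system `𝓡^?` -/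

/-- The rule instances of the partial-evaluation semantics `𝓡^?`; `none` plays the role
of the unknown result `?`. -/
inductive URule (S : BigStep C) : C → Option C → List (C × Option C) → Prop
  | ax {r : C} : r ∈ S.R → URule S r (some r) []
  | rule {ρ : Rule C} : ρ ∈ S.Rules →
      URule S ρ.concl (some ρ.lastJ.res) (ρ.premises.map (fun j => (j.conf, some j.res)))
  | unk_ax {c : C} : URule S c none []
  | unk {ρ : Rule C} {pre rest : List (Judg C)} {j : Judg C} {r : C} :
      ρ ∈ S.Rules → ρ.premises = pre ++ j :: rest → r ∈ S.R →
      URule S ρ.concl none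
        (pre.map (fun j' => (j'.conf, some j'.res)) ++ [(j.conf, some r)])
  | prop {ρ : Rule C} {pre rest : List (Judg C)} {j : Judg C} :
      ρ ∈ S.Rules → ρ.premises = pre ++ j :: rest →
      URule S ρ.concl none
        (pre.map (fun j' => (j'.conf, some j'.res)) ++ [(j.conf, none)])

/-! ## Possibly infinite trees as partial functions -/

/-- A (possibly infinite) tree labelled by judgments `c ⇒ u`, `u ∈ R ∪ {?}`, given as a
partial function on addresses (lists of positive naturals), with nonempty domain closed
under parents and left siblings. -/
structure PTree (C : Type u) where
  label : List ℕ+ → Option (C × Option C)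
  root_def : label [] ≠ none
  closed : ∀ (α : List ℕ+) (n : ℕ+), label (α ++ [n]) ≠ none → label α ≠ none
  siblings : ∀ (α : List ℕ+) (n k : ℕ+), k ≤ n →
    label (α ++ [n]) ≠ none → label (α ++ [k]) ≠ none

/-- `τ` is a proof tree in `𝓡^?`: at each node, the children are exactly the premises
of a rule of `𝓡^?` with the node's judgment as conclusion. -/
def PTree.IsProofTree (S : BigStep C) (τ : PTree C) : Prop :=
  ∀ (α : List ℕ+) (p : C × Option C), τ.label α = some p →
    ∃ prems : List (C × Option C), URule S p.1 p.2 prems ∧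
      ∀ n : ℕ+, τ.label (α ++ [n]) = prems[(n : ℕ) - 1]?

/-- The order `τ ⊑ τ'` on trees: larger domain, same configurations, and equal subtrees
at nodes whose result is already known (in `R`). -/
def PTree.LE (τ τ' : PTree C) : Prop :=
  ∀ (α : List ℕ+) (p : C × Option C), τ.label α = some p →
    ∃ p' : C × Option C, τ'.label α = some p' ∧ p.1 = p'.1 ∧
      (p.2 ≠ none → ∀ β : List ℕ+, τ.label (α ++ β) = τ'.label (α ++ β))

/-- A tree is finite if its domain is finite. -/
def PTree.Finite (τ : PTree C) : Prop := {α : List ℕ+ | τ.label α ≠ none}.Finite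

/-- A (typically infinite) proof tree is well-formed if at every level there is a node
labelled by an incomplete judgment, and subtrees rooted at complete judgments are finite. -/
def PTree.WellFormed (τ : PTree C) : Prop :=
  (∀ n : ℕ, ∃ (α : List ℕ+) (c : C), α.length = n ∧ τ.label α = some (c, none)) ∧
  (∀ (α : List ℕ+) (c r : C), τ.label α = some (c, some r) →
    {β : List ℕ+ | τ.label (α ++ β) ≠ none}.Finite)

/-! ## Finite proof trees and the reduction relation -/

/-- Finite trees labelled by judgments `c ⇒ u`, `u ∈ R ∪ {?}` (with `none` playing `?`). -/
inductive FTree (C : Type u) where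
  | node : C → Option C → List (FTree C) → FTree C

/-- The judgment at the root of a finite tree. -/
def FTree.judg : FTree C → C × Option C
  | .node c u _ => (c, u)

/-- `τ` is a finite proof tree in the partial-evaluation semantics `𝓡^?`. -/
inductive IsFPT (S : BigStep C) : FTree C → Prop
  | mk {c : C} {u : Option C} {l : List (FTree C)} :
      URule S c u (l.map FTree.judg) →
      (∀ τ ∈ l, IsFPT S τ) →
      IsFPT S (.node c u l)

/-- A finite proof tree is complete if all its judgments have results in `R`. -/
inductive FTree.Complete (S : BigStep C) : FTree C → Prop
  | mk {c : C} {r : C} {l : List (FTree C)} :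
      r ∈ S.R →
      (∀ τ ∈ l, FTree.Complete S τ) →
      FTree.Complete S (.node c (some r) l)

/-- The order `τ ⊑ τ'` on finite trees. -/
inductive FTreeLE : FTree C → FTree C → Prop
  | done {c r : C} {l : List (FTree C)} :
      FTreeLE (.node c (some r) l) (.node c (some r) l)
  | step {c : C} {u' : Option C} {l l₁ l₂ : List (FTree C)} :
      l.length = l₁.length →
      (∀ p ∈ l.zip l₁, FTreeLE p.1 p.2) →
      FTreeLE (.node c none l) (.node c u' (l₁ ++ l₂))

/-- The one-step reduction relation `⇝` on finite proof trees in `𝓡^?`. -/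
inductive Red (S : BigStep C) : FTree C → FTree C → Prop
  /-- The axiom `r ⇒ ?` (with `r ∈ R`) steps to the axiom `r ⇒ r`. -/
  | res {r : C} : r ∈ S.R → Red S (.node r none []) (.node r (some r) [])
  /-- The axiom `c ⇒ ?` steps, for a rule `ρ` with conclusion configuration `c`,
  to the tree applying `prop(ρ,1,?)` to the leaf `c' ⇒ ?`, `c'` the first premise
  configuration of `ρ`. -/
  | start {ρ : Rule C} {j : Judg C} {rest : List (Judg C)} :
      ρ ∈ S.Rules → ρ.premises = j :: rest →
      Red S (.node ρ.concl none []) (.node ρ.concl none [.node j.conf none []])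
  /-- A tree with root `c ⇒ ?` whose children are the first `i` premises of some
  `ρ' ∈ 𝓡` (with `#ρ' = i`, last premise result `r`) steps to the same tree with
  root `c ⇒ r`. -/
  | complete {ρ' : Rule C} {pre : List (Judg C)} {j' : Judg C} {l : List (FTree C)} :
      ρ' ∈ S.Rules → ρ'.premises = pre ++ [j'] →
      l.map FTree.judg = pre.map (fun j => (j.conf, some j.res)) ++ [(j'.conf, some j'.res)] →
      Red S (.node ρ'.concl none l) (.node ρ'.concl (some j'.res) l)
  /-- A tree with root `c ⇒ ?` whose children are the first `i` premises of some
  `ρ' ∈ 𝓡` having an `(i+1)`-th premise steps by adding the leaf for that premise's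
  configuration. -/
  | next {ρ' : Rule C} {pre rest : List (Judg C)} {j' j'' : Judg C} {l : List (FTree C)} :
      ρ' ∈ S.Rules → ρ'.premises = pre ++ j' :: j'' :: rest →
      l.map FTree.judg = pre.map (fun j => (j.conf, some j.res)) ++ [(j'.conf, some j'.res)] →
      Red S (.node ρ'.concl none l) (.node ρ'.concl none (l ++ [.node j''.conf none []]))
  /-- Propagation: a step of the last child is propagated. -/
  | inner {c : C} {l : List (FTree C)} {τ τ' : FTree C} :
      Red S τ τ' →
      Red S (.node c none (l ++ [τ])) (.node c none (l ++ [τ']))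


/-! ## Auxiliary lemmas for Statement 12 -/

section Aux

private theorem zip_same_eq {l : List (FTree C)} {p : FTree C × FTree C}
    (hp : p ∈ l.zip l) : p.1 = p.2 := by
  induction l with
  | nil => simp at hp
  | cons a t ih =>
    rw [List.zip_cons_cons] at hp
    rcases List.mem_cons.mp hp with rfl | hp
    · rfl
    · exact ih hp

private theorem ftree_sizeOf_pos (τ : FTree C) : 0 < sizeOf τ := by
  cases τ; simp

private theorem FTreeLE_refl_aux : ∀ n (τ : FTree C), sizeOf τ ≤ n → FTreeLE τ τ := by
  intro n
  induction n with
  | zero => intro τ h; exact absurd h (by have := ftree_sizeOf_pos τ; omega)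
  | succ n ih =>
    intro τ h
    match τ with
    | .node c (some r) l => exact .done
    | .node c none l =>
      have hstep : FTreeLE (FTree.node c none l) (FTree.node c none (l ++ [])) := by
        apply FTreeLE.step rfl
        intro p hp
        rw [zip_same_eq hp]
        apply ih
        have h1 : p.2 ∈ l := (List.of_mem_zip hp).2
        have h2 : sizeOf p.2 < sizeOf l := List.sizeOf_lt_of_mem h1
        have h3 : sizeOf (FTree.node c none l) ≤ n + 1 := h
        simp at h3
        omega
      simpa using hstep

theorem FTreeLE_refl (τ : FTree C) : FTreeLE τ τ := FTreeLE_refl_aux (sizeOf τ) τ le_rfl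

private theorem FTreeLE_eq_of_some {a b : FTree C} (h : FTreeLE a b)
    (ha : a.judg.2 ≠ none) : a = b := by
  cases h with
  | done => rfl
  | step => simp [FTree.judg] at ha

/-- Part 1: a reduction step strictly increases the tree in the order `⊑`. -/
theorem red_lt {S : BigStep C} {τ τ' : FTree C} (h : Red S τ τ') :
    FTreeLE τ τ' ∧ τ ≠ τ' := by
  have refl_pairs : ∀ (l : List (FTree C)), ∀ p ∈ l.zip l, FTreeLE p.1 p.2 := by
    intro l p hp
    rw [zip_same_eq hp]
    exact FTreeLE_refl _
  induction h with
  | @res r hr =>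
    constructor
    · have h1 := FTreeLE.step (c := r) (u' := some r) (l := []) (l₁ := []) (l₂ := [])
        rfl (by simp)
      simpa using h1
    · intro hc; simp at hc
  | @start ρ j rest hρ hprem =>
    constructor
    · have h1 := FTreeLE.step (c := ρ.concl) (u' := none) (l := []) (l₁ := [])
        (l₂ := [FTree.node j.conf none []]) rfl (by simp)
      simpa using h1
    · intro hc; simp at hc
  | @complete ρ' pre j' l hρ hprem hl =>
    constructor
    · have h1 := FTreeLE.step (c := ρ'.concl) (u' := some j'.res) (l := l) (l₁ := l)
        (l₂ := []) rfl (refl_pairs l)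
      simpa using h1
    · intro hc; simp at hc
  | @next ρ' pre rest j' j'' l hρ hprem hl =>
    constructor
    · exact FTreeLE.step rfl (refl_pairs l)
    · intro hc
      rw [FTree.node.injEq] at hc
      have := congrArg List.length hc.2.2
      simp at this
  | @inner c l a b hred ih =>
    constructor
    · have h1 : FTreeLE (FTree.node c none (l ++ [a]))
          (FTree.node c none ((l ++ [b]) ++ [])) := by
        apply FTreeLE.step (by simp)
        intro p hp
        rw [List.zip_append (by rfl)] at hp
        rcases List.mem_append.mp hp with hp | hp
        · rw [zip_same_eq hp]; exact FTreeLE_refl _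
        · have hp2 : p = (a, b) := by simpa using hp
          rw [hp2]
          exact ih.1
      simpa using h1
    · intro hc
      rw [FTree.node.injEq] at hc
      have h2 := List.append_cancel_left hc.2.2
      simp at h2
      exact ih.2 h2

/-- Lifting a reduction sequence of the last child. -/
private theorem rtg_inner {S : BigStep C} {σ σ' : FTree C}
    (h : Relation.ReflTransGen (Red S) σ σ') (c : C) (l : List (FTree C)) :
    Relation.ReflTransGen (Red S) (.node c none (l ++ [σ])) (.node c none (l ++ [σ'])) := by
  induction h with
  | refl => exact .refl
  | tail _ hstep ih => exact ih.tail (Red.inner hstep)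

/-- Phase 1: reduce `node c none l` to `node c none l₁` when all but the last children
are equal and the last children reduce. -/
private theorem phase1 {S : BigStep C} (c : C) (l l₁ : List (FTree C))
    (hlen : l.length = l₁.length)
    (heq : ∀ (i : ℕ) (h : i + 1 < l.length), l[i] = l₁[i])
    (hlast : ∀ (h : l.length - 1 < l.length),
      Relation.ReflTransGen (Red S) l[l.length - 1] (l₁[l.length - 1]'(by omega))) :
    Relation.ReflTransGen (Red S) (.node c none l) (.node c none l₁) := by
  rcases List.eq_nil_or_concat' l with rfl | ⟨L, a, rfl⟩
  · obtain rfl : l₁ = [] := by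
      cases l₁ with
      | nil => rfl
      | cons x t => simp at hlen
    exact .refl
  · rcases List.eq_nil_or_concat' l₁ with rfl | ⟨L₁, b, rfl⟩
    · simp at hlen
    · have hL : L.length = L₁.length := by simp at hlen; omega
      obtain rfl : L = L₁ := by
        apply List.ext_getElem hL
        intro i h1 h2
        have h3 : i + 1 < (L ++ [a]).length := by simp; omega
        have := heq i h3
        rwa [List.getElem_append_left h1, List.getElem_append_left h2] at this
      have h4 : (L ++ [a]).length - 1 < (L ++ [a]).length := by simp
      have h5 := hlast h4
      have ha : (L ++ [a])[(L ++ [a]).length - 1]'h4 = a := by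
        have : (L ++ [a]).length - 1 = L.length := by simp
        simp only [this]
        exact List.getElem_concat_length (l := L) (a := a) (i := L.length) rfl _
      have hb : (L ++ [b])[(L ++ [a]).length - 1]'(by simp) = b := by
        have : (L ++ [a]).length - 1 = L.length := by simp
        simp only [this]
        exact List.getElem_concat_length (l := L) (a := b) (i := L.length) rfl _
      rw [ha, hb] at h5
      exact rtg_inner h5 c L

/-- Growing a tree from a prefix of the children of a proof-tree node to all children. -/
private theorem build {S : BigStep C} {ρ : Rule C} (hρ : ρ ∈ S.Rules)
    {pre' rest' : List (Judg C)} {jl : Judg C} (hprem : ρ.premises = pre' ++ jl :: rest')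
    {ul : Option C} (m' : List (FTree C))
    (hm : m'.map FTree.judg = pre'.map (fun j => (j.conf, some j.res)) ++ [(jl.conf, ul)])
    (grow : ∀ σ ∈ m', Relation.ReflTransGen (Red S) (.node σ.judg.1 none []) σ) :
    ∀ k, k ≤ m'.length →
      Relation.ReflTransGen (Red S) (.node ρ.concl none (m'.take k)) (.node ρ.concl none m') := by
  have hmlen : m'.length = pre'.length + 1 := by
    have := congrArg List.length hm; simpa using this
  set P : List (Judg C) := pre' ++ [jl] with hP
  have hPlen : P.length = pre'.length + 1 := by simp [hP]
  have hpremP : ρ.premises = P ++ rest' := by simp [hP, hprem]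
  have hmfst : m'.map (fun σ => σ.judg.1) = P.map Judg.conf := by
    have := congrArg (List.map Prod.fst) hm
    simpa [List.map_map, hP, Function.comp_def] using this
  have key : ∀ gas k, m'.length - k = gas → k ≤ m'.length →
      Relation.ReflTransGen (Red S) (.node ρ.concl none (m'.take k)) (.node ρ.concl none m') := by
    intro gas
    induction gas with
    | zero =>
      intro k hgas hk
      obtain rfl : k = m'.length := by omega
      rw [List.take_length]
    | succ g ihg =>
      intro k hgas hk
      have hklt : k < m'.length := by omega
      have hkP : k < P.length := by omega
      have hkpre : k ≤ pre'.length := by omega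
      -- decomposition of the premises at position k
      have hdec : ρ.premises = P.take k ++ P[k] :: (P.drop (k + 1) ++ rest') := by
        rw [hpremP]
        conv_lhs => rw [← List.take_append_drop k P, List.drop_eq_getElem_cons hkP]
        rw [List.append_assoc, List.cons_append]
      have htakeP : P.take k = pre'.take k := by
        rw [hP, List.take_append_of_le_length hkpre]
      -- the first step: append a leaf for premise k
      have step1 : Red S (.node ρ.concl none (m'.take k))
          (.node ρ.concl none (m'.take k ++ [.node (P[k]'hkP).conf none []])) := by
        rcases Nat.eq_zero_or_pos k with rfl | hk1
        · have hdec0 : ρ.premises = P[0] :: (P.drop 1 ++ rest') := by simpa using hdec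
          simpa using Red.start hρ hdec0
        · have hi : k - 1 < pre'.length := by omega
          have htk : pre'.take k = pre'.take (k - 1) ++ [pre'[k - 1]'hi] := by
            have h2 : pre'.take (k - 1 + 1) = pre'.take (k - 1) ++ [pre'[k - 1]'hi] := by
              rw [List.take_succ, List.getElem?_eq_getElem hi]
              rfl
            rwa [show k - 1 + 1 = k from by omega] at h2
          have hdec' : ρ.premises =
              pre'.take (k - 1) ++ pre'[k - 1] :: P[k] :: (P.drop (k + 1) ++ rest') := by
            rw [hdec, htakeP, htk]
            rw [List.append_assoc, List.singleton_append]
          have hcur : (m'.take k).map FTree.judg =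
              (pre'.take (k - 1)).map (fun j => (j.conf, some j.res)) ++
                [((pre'[k - 1]'hi).conf, some (pre'[k - 1]'hi).res)] := by
            have e1 : (m'.take k).map FTree.judg =
                ((pre'.map (fun j => (j.conf, some j.res))).take k) := by
              rw [List.map_take, hm, List.take_append_of_le_length (by simpa using hkpre)]
            rw [e1, ← List.map_take, htk]
            simp only [List.map_append, List.map_cons, List.map_nil]
          exact Red.next hρ hdec' hcur
      -- grow the new leaf into the k-th child
      have hb : (m'[k]'hklt).judg.1 = (P[k]'hkP).conf := by
        have h1 : (m'.map (fun σ => σ.judg.1))[k]'(by simpa using hklt) =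
            (P.map Judg.conf)[k]'(by simpa using hkP) := by
          simp only [hmfst]
        simpa using h1
      have hgrow := grow (m'[k]'hklt) (List.getElem_mem hklt)
      rw [hb] at hgrow
      have step2 := rtg_inner hgrow ρ.concl (m'.take k)
      have htake : m'.take k ++ [m'[k]'hklt] = m'.take (k + 1) := by
        rw [List.take_succ, List.getElem?_eq_getElem hklt]
        rfl
      rw [htake] at step2
      exact .head step1 (step2.trans (ihg (k + 1) (by omega) (by omega)))
  intro k hk
  exact key (m'.length - k) k rfl hk

/-- Phase 2: from a prefix of the children of a proof-tree node to the full node. -/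
private theorem phase2 {S : BigStep C} {c : C} {u' : Option C} {m' : List (FTree C)}
    (hrule' : URule S c u' (m'.map FTree.judg))
    (grow : ∀ σ ∈ m', Relation.ReflTransGen (Red S) (.node σ.judg.1 none []) σ)
    (k : ℕ) (hk : k ≤ m'.length) :
    Relation.ReflTransGen (Red S) (.node c none (m'.take k)) (.node c u' m') := by
  generalize hml : m'.map FTree.judg = prems at hrule'
  cases hrule' with
  | ax hr =>
    obtain rfl : m' = [] := by simpa using hml
    obtain rfl : k = 0 := by simpa using hk
    exact .single (Red.res hr)
  | @rule ρ hρ =>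
    rcases List.eq_nil_or_concat' ρ.premises with h | ⟨pre0, jl, hsplit⟩
    · exact absurd h ρ.ne
    have hm : m'.map FTree.judg =
        pre0.map (fun j => (j.conf, some j.res)) ++ [(jl.conf, some jl.res)] := by
      rw [hml, hsplit]
      simp
    have hb := build hρ (by rw [hsplit]) m' hm grow k hk
    refine hb.tail ?_
    have h1 : ρ.premises.getLast? = some jl := by
      rw [hsplit]
      exact List.getLast?_concat
    have h2 : ρ.premises.getLast? = some (ρ.premises.getLast ρ.ne) :=
      List.getLast?_eq_getLast _
    have hlast : ρ.lastJ = jl := by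
      rw [Rule.lastJ]
      exact Option.some_injective _ (h2.symm.trans h1)
    rw [hlast]
    exact Red.complete hρ hsplit hm
  | unk_ax =>
    obtain rfl : m' = [] := by simpa using hml
    obtain rfl : k = 0 := by simpa using hk
    exact .refl
  | @unk ρ pre rest j r hρ hsplit hr =>
    exact build hρ hsplit m' hml grow k hk
  | @prop ρ pre rest j hρ hsplit =>
    exact build hρ hsplit m' hml grow k hk

/-- Part 2, main lemma: `τ ⊑ τ'` implies `τ ⇝* τ'`, by strong induction on the size of `τ'`. -/
private theorem le_rtg_aux {S : BigStep C} :
    ∀ n (τ' : FTree C), sizeOf τ' ≤ n → IsFPT S τ' →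
      ∀ τ, IsFPT S τ → FTreeLE τ τ' → Relation.ReflTransGen (Red S) τ τ' := by
  intro n
  induction n with
  | zero =>
    intro τ' h
    exact absurd h (by have := ftree_sizeOf_pos τ'; omega)
  | succ n ih =>
    intro τ' hs hfpt' τ hfpt hle
    cases hle with
    | done => exact .refl
    | @step c u' l l₁ l₂ hlen hpairs =>
      cases hfpt' with
      | @mk _ _ _ hrule' hch' =>
        cases hfpt with
        | @mk _ _ _ hrule hch =>
          have hsz : ∀ σ ∈ l₁ ++ l₂, sizeOf σ ≤ n := by
            intro σ hσ
            have h1 : sizeOf σ < sizeOf (l₁ ++ l₂) := List.sizeOf_lt_of_mem hσ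
            have h2 : sizeOf (FTree.node c u' (l₁ ++ l₂)) ≤ n + 1 := hs
            simp at h2
            omega
          have grow : ∀ σ ∈ l₁ ++ l₂,
              Relation.ReflTransGen (Red S) (.node σ.judg.1 none []) σ := by
            intro σ hσ
            refine ih σ (hsz σ hσ) (hch' σ hσ) _ ⟨URule.unk_ax, by simp⟩ ?_
            cases σ with
            | node c'' u'' m =>
              have := FTreeLE.step (c := c'') (u' := u'') (l := []) (l₁ := [])
                (l₂ := m) rfl (by simp)
              simpa [FTree.judg] using this
          have hpair_i : ∀ (i : ℕ) (h : i < l.length),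
              FTreeLE l[i] (l₁[i]'(by omega)) := by
            intro i h
            have hz : i < (l.zip l₁).length := by simp; omega
            have := hpairs ((l.zip l₁)[i]'hz) (List.getElem_mem hz)
            rwa [List.getElem_zip] at this
          -- Phase 1
          have p1 : Relation.ReflTransGen (Red S) (.node c none l) (.node c none l₁) := by
            generalize hml : l.map FTree.judg = prems at hrule
            cases hrule with
            | unk_ax =>
              obtain rfl : l = [] := by simpa using hml
              obtain rfl : l₁ = [] := by
                cases l₁ with
                | nil => rfl
                | cons x t => simp at hlen
              exact .refl
            | @unk ρ pre rest j r hρ hsplit hr =>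
              have hsome : ∀ (i : ℕ) (h : i < l.length), (l[i]'h).judg.2 ≠ none := by
                intro i h
                have h2 : (l[i]'h).judg ∈ l.map FTree.judg := by
                  exact List.mem_map_of_mem (List.getElem_mem h)
                rw [hml] at h2
                rcases List.mem_append.mp h2 with h3 | h3
                · obtain ⟨j', _, hj'⟩ := List.mem_map.mp h3
                  rw [← hj']
                  simp
                · simp at h3
                  rw [h3]
                  simp
              obtain rfl : l = l₁ := by
                apply List.ext_getElem hlen
                intro i h1 h2
                exact FTreeLE_eq_of_some (hpair_i i h1) (hsome i h1)
              exact .refl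
            | @prop ρ pre rest j hρ hsplit =>
              have hlenl : l.length = pre.length + 1 := by
                have := congrArg List.length hml; simpa using this
              apply phase1 _ l l₁ hlen
              · intro i h
                apply FTreeLE_eq_of_some (hpair_i i (by omega))
                have hb1 : i < (l.map FTree.judg).length := by simp; omega
                have h2 := List.getElem_of_eq hml hb1
                rw [List.getElem_map] at h2
                rw [h2, List.getElem_append_left (by simp; omega)]
                simp
              · intro h
                have hmem : (l₁[l.length - 1]'(by omega)) ∈ l₁ ++ l₂ :=
                  List.mem_append_left _ (List.getElem_mem (by omega))
                exact ih _ (hsz _ hmem) (hch' _ hmem) _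
                  (hch _ (List.getElem_mem h)) (hpair_i _ h)
          -- Phase 2
          have p2 := phase2 hrule' grow l₁.length (by simp)
          rw [List.take_left] at p2
          exact p1.trans p2

end Aux

/-- Proposition `tree-ord-arrow`: for finite proof trees in `𝓡^?`,
(1) `τ ⇝ τ'` implies `τ ⊏ τ'`, and (2) `τ ⊑ τ'` implies `τ ⇝* τ'`. -/
theorem statement12 {C : Type u} (S : BigStep C) (hBP : S.BP) (τ τ' : FTree C)
    (hτ : IsFPT S τ) (hτ' : IsFPT S τ') :
    (Red S τ τ' → FTreeLE τ τ' ∧ τ ≠ τ') ∧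
    (FTreeLE τ τ' → Relation.ReflTransGen (Red S) τ τ') := by
  exact ⟨fun h => red_lt h, fun h => le_rtg_aux (sizeOf τ') τ' le_rfl hτ' τ hτ h⟩

end BigStepMeta
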